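/- Let θ > 0, −1/2 < a < 0, and μ ∈ (0,1) with μ ≥ −a and 1 − μ ≥ −a. Set θ̃ = (1+a)θ and μ̃ = (2μ + a)/(2(1+a)). Then μ̃ ∈ (0,1), and for every h > 0 and x ∈ (0,1): (i) c := μ̃ + e^{−θ̃h}(x − μ̃) ∈ (0,1) and c' := μ̃ + e^{−θ̃h/2}(x − μ̃) ∈ (0,1); (ii) for every z ∈ ℝ the LT update sin²((√(−2aθ)/2)·z + arcsin(√c)) lies in [0,1]; (iii) for every z ∈ ℝ the Strang update μ̃ + e^{−θ̃h/2}(sin²((√(−2aθ)/2)·z + arcsin(√c')) − μ̃) lies in the open interval (0,1). Hence the splitting schemes preserve the state space of the Wright–Fisher diffusion when both boundaries are of entrance type. -/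
import Mathlib


/-- `μ̃ = (2μ + a)/(2(1+a))` for the Wright–Fisher splitting. -/
noncomputable def wfMuTilde (a μ : ℝ) : ℝ := (2 * μ + a) / (2 * (1 + a))

/-- `θ̃ = (1+a)θ` for the Wright–Fisher splitting. -/
noncomputable def wfThetaTilde (a θ : ℝ) : ℝ := (1 + a) * θ

/-- Exact flow `μ̃ + e^{−θ̃h}(x − μ̃)` of the deterministic Wright–Fisher subequation. -/
noncomputable def wfODE (a θ μ h x : ℝ) : ℝ :=
  wfMuTilde a μ + Real.exp (-(wfThetaTilde a θ) * h) * (x - wfMuTilde a μ)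

/-- One-step Lie–Trotter update for the Wright–Fisher diffusion with Gaussian
increment `z`: `sin²((√(−2aθ)/2) z + arcsin √(μ̃ + e^{−θ̃h}(x − μ̃)))`. -/
noncomputable def wfLT (a θ μ h x z : ℝ) : ℝ :=
  Real.sin (Real.sqrt (-2 * a * θ) / 2 * z
    + Real.arcsin (Real.sqrt (wfODE a θ μ h x))) ^ 2

/-- One-step Strang update for the Wright–Fisher diffusion with Gaussian increment `z`. -/
noncomputable def wfStrang (a θ μ h x z : ℝ) : ℝ :=
  wfMuTilde a μ
    + Real.exp (-(wfThetaTilde a θ) * h / 2) * (wfLT a θ μ (h / 2) x z - wfMuTilde a μ)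

/-- State-space preservation of the splitting schemes for the Wright–Fisher diffusion
when both boundaries are of entrance type: `μ̃ ∈ (0,1)`, the deterministic flows stay in
`(0,1)`, the Lie–Trotter update stays in `[0,1]`, and the Strang update stays in `(0,1)`. -/
theorem wf_splitting_state_space_preservation
    (θ a μ : ℝ) (hθ : 0 < θ) (ha1 : -(1 / 2) < a) (ha2 : a < 0)
    (hμ0 : 0 < μ) (hμ1 : μ < 1) (hμa : -a ≤ μ) (hμa' : -a ≤ 1 - μ) :
    (0 < wfMuTilde a μ ∧ wfMuTilde a μ < 1)
      ∧ ∀ h x : ℝ, 0 < h → 0 < x → x < 1 →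
          (0 < wfODE a θ μ h x ∧ wfODE a θ μ h x < 1)
            ∧ (0 < wfODE a θ μ (h / 2) x ∧ wfODE a θ μ (h / 2) x < 1)
            ∧ (∀ z : ℝ, wfLT a θ μ h x z ∈ Set.Icc (0 : ℝ) 1)
            ∧ (∀ z : ℝ, wfStrang a θ μ h x z ∈ Set.Ioo (0 : ℝ) 1) := by
  have hA : (0:ℝ) < 1 + a := by linarith
  have hden : (0:ℝ) < 2 * (1 + a) := by linarith
  have hμt0 : 0 < wfMuTilde a μ := div_pos (by linarith) hden
  have hμt1 : wfMuTilde a μ < 1 := by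
    unfold wfMuTilde; rw [div_lt_one hden]; linarith
  refine ⟨⟨hμt0, hμt1⟩, ?_⟩
  intro h x hh hx0 hx1
  have hθt : 0 < wfThetaTilde a θ := mul_pos hA hθ
  have key : ∀ t : ℝ, 0 < t → 0 < wfODE a θ μ t x ∧ wfODE a θ μ t x < 1 := by
    intro t ht
    have hl0 : 0 < Real.exp (-(wfThetaTilde a θ) * t) := Real.exp_pos _
    have hl1 : Real.exp (-(wfThetaTilde a θ) * t) < 1 := by
      rw [Real.exp_lt_one_iff]; nlinarith [mul_pos hθt ht]
    unfold wfODE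
    constructor
    · nlinarith [mul_pos hl0 hx0,
        mul_pos (by linarith : (0:ℝ) < 1 - Real.exp (-(wfThetaTilde a θ) * t)) hμt0]
    · nlinarith [mul_pos hl0 (by linarith : (0:ℝ) < 1 - x),
        mul_pos (by linarith : (0:ℝ) < 1 - Real.exp (-(wfThetaTilde a θ) * t))
          (by linarith : (0:ℝ) < 1 - wfMuTilde a μ)]
  have hLT : ∀ t z : ℝ, wfLT a θ μ t x z ∈ Set.Icc (0 : ℝ) 1 := by
    intro t z
    exact ⟨sq_nonneg _, Real.sin_sq_le_one _⟩
  refine ⟨key h hh, key (h/2) (by linarith), fun z => hLT h z, fun z => ?_⟩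
  have hs := hLT (h/2) z
  obtain ⟨hs0, hs1⟩ := hs
  have hl0 : 0 < Real.exp (-(wfThetaTilde a θ) * h / 2) := Real.exp_pos _
  have hl1 : Real.exp (-(wfThetaTilde a θ) * h / 2) < 1 := by
    rw [Real.exp_lt_one_iff]; nlinarith [mul_pos hθt hh]
  unfold wfStrang
  constructor
  · nlinarith [mul_nonneg hl0.le hs0,
      mul_pos (by linarith : (0:ℝ) < 1 - Real.exp (-(wfThetaTilde a θ) * h / 2)) hμt0]
  · nlinarith [mul_nonneg hl0.le (by linarith : (0:ℝ) ≤ 1 - wfLT a θ μ (h/2) x z),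
      mul_pos (by linarith : (0:ℝ) < 1 - Real.exp (-(wfThetaTilde a θ) * h / 2))
        (by linarith : (0:ℝ) < 1 - wfMuTilde a μ)]
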